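/- Let d ≥ 2, q = d/(d-1), and g(x) = (1/q)·log(∑_{i=1}^d |x_i|^q) on ℝ^d \ {0}. Then for each i, ∂g/∂x_i(x) = |x_i|^{q-1}·sign(x_i)/|x|_q^q, and the vector field Θ with components Θ_i(x) = |∂g/∂x_i(x)|^{d-2}·∂g/∂x_i(x) = x_i/|x|_q^d satisfies div Θ(x) = 0 for all x ≠ 0. In other words, g is d-harmonic on ℝ^d \ {0} for the operator Δ_p u = div((|∂u/∂x_i|^{p-2}∂u/∂x_i)_i) with p=d. -/

import Mathlib

open Real Finset

private lemma abs_rpow_hasDeriv {q : ℝ} (hq : 1 < q) (t : ℝ) :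
    HasDerivAt (fun s : ℝ => |s| ^ q) (q * |t| ^ (q - 1) * Real.sign t) t := by
  rcases lt_trichotomy t 0 with ht | rfl | ht
  · have habs : HasDerivAt (fun s : ℝ => |s|) (-1) t := by
      have h : HasDerivAt (fun s : ℝ => -s) (-1) t := (hasDerivAt_id t).neg
      refine h.congr_of_eventuallyEq ?_
      filter_upwards [Iio_mem_nhds ht] with s hs
      exact abs_of_neg hs
    have := habs.rpow_const (p := q) (Or.inl (abs_ne_zero.mpr ht.ne))
    simpa [Real.sign_of_neg ht, mul_comm, mul_assoc, mul_left_comm] using this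
  · have hq0 : q ≠ 0 := by linarith
    simp only [Real.sign_zero, mul_zero]
    rw [hasDerivAt_iff_tendsto_slope]
    apply squeeze_zero_norm' (a := fun s : ℝ => |s| ^ (q - 1))
    · filter_upwards [self_mem_nhdsWithin] with s hs
      have hs0 : s ≠ 0 := hs
      have hsa : (0:ℝ) < |s| := abs_pos.mpr hs0
      have : slope (fun s : ℝ => |s| ^ q) 0 s = |s| ^ q / s := by
        simp [slope, abs_zero, Real.zero_rpow hq0, smul_eq_mul, div_eq_inv_mul]
      rw [this]
      rw [Real.norm_eq_abs, abs_div, abs_of_nonneg (Real.rpow_nonneg (abs_nonneg s) q)]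
      rw [Real.rpow_sub hsa, Real.rpow_one]
    · have hcont : ContinuousAt (fun y : ℝ => y ^ (q - 1)) 0 :=
        Real.continuousAt_rpow_const 0 (q - 1) (Or.inr (by linarith))
      have h0 : (0:ℝ) ^ (q - 1) = 0 := Real.zero_rpow (by linarith)
      have habs0 : Filter.Tendsto (fun s : ℝ => |s|) (nhds 0) (nhds (0:ℝ)) := by
        simpa using continuous_abs.tendsto (0:ℝ)
      have h2 := hcont.tendsto
      rw [h0] at h2
      exact (h2.comp habs0).mono_left nhdsWithin_le_nhds
  · have habs : HasDerivAt (fun s : ℝ => |s|) 1 t := by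
      have h : HasDerivAt (fun s : ℝ => s) 1 t := hasDerivAt_id t
      refine h.congr_of_eventuallyEq ?_
      filter_upwards [Ioi_mem_nhds ht] with s hs
      exact abs_of_pos hs
    have := habs.rpow_const (p := q) (Or.inl (abs_ne_zero.mpr ht.ne'))
    simpa [Real.sign_of_pos ht, mul_comm, mul_assoc, mul_left_comm] using this

private lemma abs_mul_sign' (x : ℝ) : |x| * Real.sign x = x := by
  rcases lt_trichotomy x 0 with h | rfl | h
  · simp [Real.sign_of_neg h, abs_of_neg h]
  · simp
  · simp [Real.sign_of_pos h, abs_of_pos h]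

private lemma self_mul_sign' (x : ℝ) : x * Real.sign x = |x| := by
  rcases lt_trichotomy x 0 with h | rfl | h
  · simp [Real.sign_of_neg h, abs_of_neg h]
  · simp
  · simp [Real.sign_of_pos h, abs_of_pos h]

/-- The function g(x) = (1/q)·log(∑|x_i|^q) with q = d/(d-1) has partial derivatives
∂_i g(x) = |x_i|^{q-1} sign(x_i)/|x|_q^q, the associated vector field
Θ_i(x) = |∂_i g|^{d-2} ∂_i g = x_i/|x|_q^d, and div Θ = 0 away from 0;
i.e. g is d-harmonic on ℝ^d \ {0}. (Note |x|_q^q = ∑_j |x_j|^q and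
|x|_q^d = (∑_j |x_j|^q)^{d-1} since q(d-1) = d.) -/
theorem g_is_d_harmonic (d : ℕ) (hd : 2 ≤ d) (q : ℝ) (hq : q = d / ((d : ℝ) - 1))
    (g : (Fin d → ℝ) → ℝ)
    (hg : ∀ x : Fin d → ℝ, g x = q⁻¹ * Real.log (∑ i, |x i| ^ q)) :
    ∀ x : Fin d → ℝ, x ≠ 0 →
      (∀ i, deriv (fun t => g (Function.update x i t)) (x i) =
        |x i| ^ (q - 1) * Real.sign (x i) / (∑ j, |x j| ^ q)) ∧
      (∀ i, |deriv (fun t => g (Function.update x i t)) (x i)| ^ ((d : ℝ) - 2) *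
          deriv (fun t => g (Function.update x i t)) (x i) =
        x i / (∑ j, |x j| ^ q) ^ ((d : ℝ) - 1)) ∧
      (∑ i, deriv
          (fun t => t / (∑ j, |Function.update x i t j| ^ q) ^ ((d : ℝ) - 1)) (x i) = 0) := by
  have hd2 : (2:ℝ) ≤ (d:ℝ) := by exact_mod_cast hd
  have hd1 : (0:ℝ) < (d:ℝ) - 1 := by linarith
  have hq1 : 1 < q := by
    rw [hq, lt_div_iff₀ hd1]; linarith
  have hq0 : q ≠ 0 := by linarith
  have hqd : q * ((d:ℝ) - 1) = d := by
    rw [hq]; field_simp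
  intro x hx
  set S := ∑ j, |x j| ^ q with hS_def
  have hS : 0 < S := by
    obtain ⟨i, hi⟩ := Function.ne_iff.mp hx
    refine Finset.sum_pos' (fun j _ => Real.rpow_nonneg (abs_nonneg _) _)
      ⟨i, Finset.mem_univ i, Real.rpow_pos_of_pos (abs_pos.mpr hi) _⟩
  have hsum : ∀ (i : Fin d) (t : ℝ), (∑ j, |Function.update x i t j| ^ q)
      = |t| ^ q + ∑ j ∈ Finset.univ \ {i}, |x j| ^ q := by
    intro i t
    have h : ∀ j, |Function.update x i t j| ^ q
        = Function.update (fun j => |x j| ^ q) i (|t| ^ q) j := fun j =>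
      Function.apply_update (fun _ a => |a| ^ q) x i t j
    simp_rw [h]
    exact Finset.sum_update_of_mem (Finset.mem_univ i) _ _
  have hC : ∀ i : Fin d, |x i| ^ q + ∑ j ∈ Finset.univ \ {i}, |x j| ^ q = S := by
    intro i
    rw [hS_def, ← Finset.sum_update_of_mem (Finset.mem_univ i)]
    exact Finset.sum_congr rfl fun j _ =>
      (Function.apply_update (fun _ a => |a| ^ q) x i (x i) j).symm.trans
        (by rw [Function.update_eq_self])
  have keyS : S ^ ((d:ℝ) - 2) * S = S ^ ((d:ℝ) - 1) := by
    nth_rewrite 2 [← Real.rpow_one S]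
    rw [← Real.rpow_add hS]; ring_nf
  have hD : ∀ i, HasDerivAt (fun t => g (Function.update x i t))
      (|x i| ^ (q - 1) * Real.sign (x i) / S) (x i) := by
    intro i
    have h1 := abs_rpow_hasDeriv hq1 (x i)
    have h2 := h1.add_const (∑ j ∈ Finset.univ \ {i}, |x j| ^ q)
    have h3 : HasDerivAt
        (fun t => Real.log (|t| ^ q + ∑ j ∈ Finset.univ \ {i}, |x j| ^ q))
        ((q * |x i| ^ (q - 1) * Real.sign (x i)) / S) (x i) := by
      have := h2.log (by rw [hC i]; exact hS.ne')
      rwa [hC i] at this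
    have h4 := h3.const_mul q⁻¹
    have heq : (fun t => g (Function.update x i t))
        = fun t => q⁻¹ * Real.log (|t| ^ q + ∑ j ∈ Finset.univ \ {i}, |x j| ^ q) := by
      funext t; rw [hg, hsum]
    rw [heq]
    convert h4 using 1
    case e'_4 => rfl
    case e'_5 => rfl
    field_simp
  have hpart1 : ∀ i, deriv (fun t => g (Function.update x i t)) (x i)
      = |x i| ^ (q - 1) * Real.sign (x i) / S := fun i => (hD i).deriv
  refine ⟨hpart1, fun i => ?_, ?_⟩
  · rw [hpart1 i]
    rcases eq_or_ne (x i) 0 with h0 | h0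
    · simp [h0]
    · have ha : 0 < |x i| := abs_pos.mpr h0
      have hsign : |Real.sign (x i)| = 1 := by
        rcases lt_or_gt_of_ne h0 with h | h
        · simp [Real.sign_of_neg h]
        · simp [Real.sign_of_pos h]
      have habs : |(|x i| ^ (q - 1) * Real.sign (x i) / S)| = |x i| ^ (q - 1) / S := by
        rw [abs_div, abs_mul, hsign, mul_one, abs_of_pos hS,
          abs_of_nonneg (Real.rpow_nonneg (abs_nonneg _) _)]
      have e1 : (q - 1) * ((d:ℝ) - 2) + (q - 1) = 1 := by linear_combination hqd
      rw [habs, Real.div_rpow (Real.rpow_nonneg (abs_nonneg _) _) hS.le,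
        ← Real.rpow_mul (abs_nonneg (x i)), div_mul_div_comm, keyS,
        ← mul_assoc, ← Real.rpow_add ha, e1, Real.rpow_one, abs_mul_sign']
  · have hxs : ∀ i : Fin d, x i * (q * |x i| ^ (q - 1) * Real.sign (x i)) = q * |x i| ^ q := by
      intro i
      rcases eq_or_ne (x i) 0 with h0 | h0
      · simp [h0, Real.zero_rpow hq0, Real.zero_rpow (show q - 1 ≠ 0 by linarith)]
      · have ha : 0 < |x i| := abs_pos.mpr h0
        have : x i * Real.sign (x i) = |x i| := self_mul_sign' (x i)
        calc x i * (q * |x i| ^ (q - 1) * Real.sign (x i))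
            = q * (|x i| ^ (q - 1) * (x i * Real.sign (x i))) := by ring
          _ = q * (|x i| ^ (q - 1) * |x i| ^ (1:ℝ)) := by rw [this, Real.rpow_one]
          _ = q * |x i| ^ q := by rw [← Real.rpow_add ha]; ring_nf
    have hDi : ∀ i : Fin d,
        HasDerivAt (fun t => t / (∑ j, |Function.update x i t j| ^ q) ^ ((d:ℝ) - 1))
          ((S ^ ((d:ℝ) - 1) - (d:ℝ) * |x i| ^ q * S ^ ((d:ℝ) - 2)) / (S ^ ((d:ℝ) - 1)) ^ 2)
          (x i) := by
      intro i
      have heq : (fun t => t / (∑ j, |Function.update x i t j| ^ q) ^ ((d:ℝ) - 1))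
          = fun t => t / (|t| ^ q + ∑ j ∈ Finset.univ \ {i}, |x j| ^ q) ^ ((d:ℝ) - 1) := by
        funext t; rw [hsum]
      rw [heq]
      have h1 := abs_rpow_hasDeriv hq1 (x i)
      have h2 := h1.add_const (∑ j ∈ Finset.univ \ {i}, |x j| ^ q)
      have h3 := h2.rpow_const (p := (d:ℝ) - 1)
        (Or.inl (by rw [hC i]; exact hS.ne'))
      rw [hC i] at h3
      have h4 := (hasDerivAt_id (x i)).div h3
        (by rw [hC i]; exact (Real.rpow_pos_of_pos hS _).ne')
      rw [hC i] at h4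
      convert h4 using 1
      case e'_4 => rfl
      case e'_5 => rfl
      case e'_8 => rfl
      rw [show ((d:ℝ) - 1 - 1) = (d:ℝ) - 2 from by ring]
      simp only [id_eq, one_mul]
      congr 1
      linear_combination (((d:ℝ) - 1) * S ^ ((d:ℝ) - 2)) * hxs i
        + (|x i| ^ q * S ^ ((d:ℝ) - 2)) * hqd
    have hsum0 : ∑ i, (S ^ ((d:ℝ) - 1) - (d:ℝ) * |x i| ^ q * S ^ ((d:ℝ) - 2)) = 0 := by
      have h1 : ∑ i, (d:ℝ) * |x i| ^ q * S ^ ((d:ℝ) - 2) = (d:ℝ) * S ^ ((d:ℝ) - 1) := by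
        have h2 : ∑ i, (d:ℝ) * |x i| ^ q * S ^ ((d:ℝ) - 2)
            = ((d:ℝ) * S ^ ((d:ℝ) - 2)) * ∑ i, |x i| ^ q := by
          rw [Finset.mul_sum]
          exact Finset.sum_congr rfl fun i _ => by ring
        rw [h2, ← hS_def]
        linear_combination (d:ℝ) * keyS
      rw [Finset.sum_sub_distrib, h1, Finset.sum_const, Finset.card_univ, Fintype.card_fin,
        nsmul_eq_mul]
      ring
    calc ∑ i, deriv
          (fun t => t / (∑ j, |Function.update x i t j| ^ q) ^ ((d : ℝ) - 1)) (x i)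
        = ∑ i, (S ^ ((d:ℝ) - 1) - (d:ℝ) * |x i| ^ q * S ^ ((d:ℝ) - 2)) / (S ^ ((d:ℝ) - 1)) ^ 2 := by
          exact Finset.sum_congr rfl fun i _ => (hDi i).deriv
      _ = 0 := by rw [← Finset.sum_div, hsum0, zero_div]
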